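/- Let n ≥ 1 and ℓ ≥ 0, and suppose a, b are measurable functions on ℝⁿ with |ξ|^{ℓ+1} a ∈ L² and |ξ|^ℓ b ∈ L². Then there exists C > 0 such that for all t > 0, ∫_{|ξ|≥√2} ( e^{-t/|ξ|²}/|ξ|² · |a(ξ)| + e^{-t/|ξ|²} |b(ξ)| )² dξ ≤ C(1+t)^{-(ℓ+3)} ‖|ξ|^{ℓ+1}a‖² + C(1+t)^{-ℓ} ‖|ξ|^ℓ b‖². -/

import Mathlib

open MeasureTheory

lemma aux_rpow_le (p y : ℝ) (hp : 0 ≤ p) (hy : 0 ≤ y) :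
    y ^ p ≤ (p / 2) ^ p * Real.exp (2 * y - p) := by
  rcases hp.eq_or_lt with rfl | hp
  · simp only [Real.rpow_zero, one_mul]
    exact Real.one_le_exp (by linarith)
  · rcases hy.eq_or_lt with rfl | hy
    · rw [Real.zero_rpow hp.ne']
      positivity
    · rw [Real.rpow_def_of_pos hy, Real.rpow_def_of_pos (by positivity : (0:ℝ) < p / 2),
        ← Real.exp_add]
      apply Real.exp_le_exp.mpr
      have hlog := Real.log_le_sub_one_of_pos (show 0 < y / (p / 2) by positivity)
      rw [Real.log_div hy.ne' (by positivity)] at hlog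
      have h3 : y / (p / 2) * p = 2 * y := by field_simp
      have h4 := mul_le_mul_of_nonneg_right hlog hp.le
      nlinarith [h4, h3]

lemma hf_key (p : ℝ) (hp : 0 ≤ p) : ∃ C : ℝ, 0 < C ∧ ∀ t : ℝ, 0 < t → ∀ r : ℝ,
    Real.sqrt 2 ≤ r →
    Real.exp (-t / r ^ 2) ^ 2 ≤ C * (1 + t) ^ (-p) * (r ^ 2) ^ p := by
  refine ⟨max 1 ((p / 2) ^ p * Real.exp (1 - p)), lt_of_lt_of_le one_pos (le_max_left _ _), ?_⟩
  intro t ht r hr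
  have hrpos : 0 < r := lt_of_lt_of_le (Real.sqrt_pos.mpr two_pos) hr
  have hr2 : (2:ℝ) ≤ r ^ 2 := by
    have h := pow_le_pow_left₀ (Real.sqrt_nonneg 2) hr 2
    rwa [Real.sq_sqrt (by norm_num : (0:ℝ) ≤ 2)] at h
  have hr2pos : (0:ℝ) < r ^ 2 := by positivity
  have h1pt : (0:ℝ) < 1 + t := by linarith
  set x : ℝ := t / r ^ 2 with hxdef
  have hxpos : 0 < x := by positivity
  have hmain : Real.exp (-t / r ^ 2) ^ 2 * ((1 + t) / r ^ 2) ^ p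
      ≤ (p / 2) ^ p * Real.exp (1 - p) := by
    have hy : (1 + t) / r ^ 2 ≤ 1 / 2 + x := by
      rw [add_div]
      have : (1:ℝ) / r ^ 2 ≤ 1 / 2 := one_div_le_one_div_of_le two_pos hr2
      linarith
    have hb : ((1 + t) / r ^ 2) ^ p ≤ (1 / 2 + x) ^ p :=
      Real.rpow_le_rpow (by positivity) hy hp
    have hc : (1 / 2 + x) ^ p ≤ (p / 2) ^ p * Real.exp (2 * (1 / 2 + x) - p) :=
      aux_rpow_le p _ hp (by positivity)
    calc Real.exp (-t / r ^ 2) ^ 2 * ((1 + t) / r ^ 2) ^ p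
        ≤ Real.exp (-t / r ^ 2) ^ 2 * ((p / 2) ^ p * Real.exp (2 * (1 / 2 + x) - p)) :=
          mul_le_mul_of_nonneg_left (hb.trans hc) (sq_nonneg _)
      _ = (p / 2) ^ p * Real.exp (1 - p) := by
          rw [sq, ← Real.exp_add, mul_comm, mul_assoc, ← Real.exp_add]
          have hnt : -t / r ^ 2 = -x := by rw [hxdef]; ring
          rw [hnt]
          have : 2 * (1 / 2 + x) - p + (-x + -x) = 1 - p := by ring
          rw [this]
  have key : Real.exp (-t / r ^ 2) ^ 2 * (1 + t) ^ p
      ≤ ((p / 2) ^ p * Real.exp (1 - p)) * (r ^ 2) ^ p := by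
    have e1 : (1 + t) ^ p = ((1 + t) / r ^ 2) ^ p * (r ^ 2) ^ p := by
      rw [← Real.mul_rpow (by positivity) (by positivity), div_mul_cancel₀ _ hr2pos.ne']
    calc Real.exp (-t / r ^ 2) ^ 2 * (1 + t) ^ p
        = (Real.exp (-t / r ^ 2) ^ 2 * ((1 + t) / r ^ 2) ^ p) * (r ^ 2) ^ p := by
          rw [e1]; ring
      _ ≤ ((p / 2) ^ p * Real.exp (1 - p)) * (r ^ 2) ^ p :=
          mul_le_mul_of_nonneg_right hmain (Real.rpow_nonneg hr2pos.le p)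
  have hCle : (p / 2) ^ p * Real.exp (1 - p) ≤ max 1 ((p / 2) ^ p * Real.exp (1 - p)) :=
    le_max_right _ _
  have hptp : (0:ℝ) < (1 + t) ^ p := Real.rpow_pos_of_pos h1pt p
  rw [Real.rpow_neg h1pt.le]
  calc Real.exp (-t / r ^ 2) ^ 2
      = Real.exp (-t / r ^ 2) ^ 2 * (1 + t) ^ p * ((1 + t) ^ p)⁻¹ := by
        field_simp
    _ ≤ ((p / 2) ^ p * Real.exp (1 - p)) * (r ^ 2) ^ p * ((1 + t) ^ p)⁻¹ :=
        mul_le_mul_of_nonneg_right key (by positivity)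
    _ ≤ (max 1 ((p / 2) ^ p * Real.exp (1 - p))) * (r ^ 2) ^ p * ((1 + t) ^ p)⁻¹ := by
        have h0 : (0:ℝ) ≤ (r ^ 2) ^ p * ((1 + t) ^ p)⁻¹ := by positivity
        nlinarith [h0, hCle]
    _ = max 1 ((p / 2) ^ p * Real.exp (1 - p)) * ((1 + t) ^ p)⁻¹ * (r ^ 2) ^ p := by ring


lemma rpow_sq_norm (ξr : ℝ) (hξr : 0 ≤ ξr) (q : ℝ) : (ξr ^ q) ^ (2:ℕ) = ξr ^ (2 * q) := by
  rw [← Real.rpow_natCast (ξr ^ q) 2, ← Real.rpow_mul hξr]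
  norm_num [mul_comm]

set_option maxHeartbeats 1000000 in
theorem high_freq_sobolev_estimate (n : ℕ) (hn : 1 ≤ n) (l : ℝ) (hl : 0 ≤ l) :
    ∃ C : ℝ, 0 < C ∧ ∀ a b : EuclideanSpace ℝ (Fin n) → ℂ,
      Measurable a → Measurable b →
      MemLp (fun ξ => (‖ξ‖ ^ (l + 1) : ℝ) • a ξ) 2 volume →
      MemLp (fun ξ => (‖ξ‖ ^ l : ℝ) • b ξ) 2 volume →
      ∀ t : ℝ, 0 < t →
        ∫ ξ in {ξ : EuclideanSpace ℝ (Fin n) | Real.sqrt 2 ≤ ‖ξ‖},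
            (Real.exp (-t / ‖ξ‖ ^ 2) / ‖ξ‖ ^ 2 * ‖a ξ‖ +
              Real.exp (-t / ‖ξ‖ ^ 2) * ‖b ξ‖) ^ 2
          ≤ C * (1 + t) ^ (-(l + 3)) *
              (∫ ξ : EuclideanSpace ℝ (Fin n), ‖ξ‖ ^ (2 * (l + 1)) * ‖a ξ‖ ^ 2) +
            C * (1 + t) ^ (-l) *
              (∫ ξ : EuclideanSpace ℝ (Fin n), ‖ξ‖ ^ (2 * l) * ‖b ξ‖ ^ 2) := by
  obtain ⟨C1, hC1, h1⟩ := hf_key (l + 3) (by linarith)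
  obtain ⟨C2, hC2, h2⟩ := hf_key l hl
  refine ⟨2 * (C1 + C2), by positivity, ?_⟩
  intro a b ha hb hma hmb t ht
  have h1pt : (0:ℝ) < 1 + t := by linarith
  have hp1 : (0:ℝ) < (1 + t) ^ (-(l + 3)) := Real.rpow_pos_of_pos h1pt _
  have hp2 : (0:ℝ) < (1 + t) ^ (-l) := Real.rpow_pos_of_pos h1pt _
  -- integrability
  have ha2 : Integrable (fun ξ : EuclideanSpace ℝ (Fin n) =>
      ‖ξ‖ ^ (2 * (l + 1)) * ‖a ξ‖ ^ 2) volume := by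
    have hint := hma.integrable_norm_rpow two_ne_zero ENNReal.ofNat_ne_top
    refine hint.congr (Filter.Eventually.of_forall fun ξ => ?_)
    show ‖(‖ξ‖ ^ (l + 1) : ℝ) • a ξ‖ ^ (ENNReal.toReal 2) = _
    rw [ENNReal.toReal_ofNat]
    rw [show ‖(‖ξ‖ ^ (l + 1) : ℝ) • a ξ‖ = ‖ξ‖ ^ (l + 1) * ‖a ξ‖ by
      rw [norm_smul, Real.norm_eq_abs, abs_of_nonneg (Real.rpow_nonneg (norm_nonneg _) _)]]
    rw [show ((2:ℝ)) = ((2:ℕ):ℝ) by norm_num, Real.rpow_natCast, mul_pow,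
      rpow_sq_norm ‖ξ‖ (norm_nonneg _) (l + 1)]
    push_cast
    ring_nf
  have hb2 : Integrable (fun ξ : EuclideanSpace ℝ (Fin n) =>
      ‖ξ‖ ^ (2 * l) * ‖b ξ‖ ^ 2) volume := by
    have hint := hmb.integrable_norm_rpow two_ne_zero ENNReal.ofNat_ne_top
    refine hint.congr (Filter.Eventually.of_forall fun ξ => ?_)
    show ‖(‖ξ‖ ^ l : ℝ) • b ξ‖ ^ (ENNReal.toReal 2) = _
    rw [ENNReal.toReal_ofNat]
    rw [show ‖(‖ξ‖ ^ l : ℝ) • b ξ‖ = ‖ξ‖ ^ l * ‖b ξ‖ by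
      rw [norm_smul, Real.norm_eq_abs, abs_of_nonneg (Real.rpow_nonneg (norm_nonneg _) _)]]
    rw [show ((2:ℝ)) = ((2:ℕ):ℝ) by norm_num, Real.rpow_natCast, mul_pow,
      rpow_sq_norm ‖ξ‖ (norm_nonneg _) l]
    push_cast
    ring_nf
  set K1 : ℝ := C1 * (1 + t) ^ (-(l + 3)) with hK1def
  set K2 : ℝ := C2 * (1 + t) ^ (-l) with hK2def
  have hK1 : 0 < K1 := mul_pos hC1 hp1
  have hK2 : 0 < K2 := mul_pos hC2 hp2
  set g : EuclideanSpace ℝ (Fin n) → ℝ := fun ξ =>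
    2 * K1 * (‖ξ‖ ^ (2 * (l + 1)) * ‖a ξ‖ ^ 2) + 2 * K2 * (‖ξ‖ ^ (2 * l) * ‖b ξ‖ ^ 2)
    with hgdef
  have hg : Integrable g volume := (ha2.const_mul _).add (hb2.const_mul _)
  have hgnn : ∀ ξ, 0 ≤ g ξ := fun ξ => by
    show (0:ℝ) ≤ 2 * K1 * (‖ξ‖ ^ (2 * (l + 1)) * ‖a ξ‖ ^ 2) + 2 * K2 * (‖ξ‖ ^ (2 * l) * ‖b ξ‖ ^ 2)
    have hn1 := Real.rpow_nonneg (norm_nonneg ξ) (2 * (l + 1))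
    have hn2 := Real.rpow_nonneg (norm_nonneg ξ) (2 * l)
    exact add_nonneg
      (mul_nonneg (by linarith) (mul_nonneg hn1 (sq_nonneg _)))
      (mul_nonneg (by linarith) (mul_nonneg hn2 (sq_nonneg _)))
  have hS : MeasurableSet {ξ : EuclideanSpace ℝ (Fin n) | Real.sqrt 2 ≤ ‖ξ‖} :=
    (isClosed_le continuous_const continuous_norm).measurableSet
  -- pointwise bound on the set
  have hpt : ∀ ξ : EuclideanSpace ℝ (Fin n), Real.sqrt 2 ≤ ‖ξ‖ →
      (Real.exp (-t / ‖ξ‖ ^ 2) / ‖ξ‖ ^ 2 * ‖a ξ‖ +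
        Real.exp (-t / ‖ξ‖ ^ 2) * ‖b ξ‖) ^ 2 ≤ g ξ := by
    intro ξ hξ
    set r : ℝ := ‖ξ‖ with hrdef
    have hrpos : 0 < r := lt_of_lt_of_le (Real.sqrt_pos.mpr two_pos) hξ
    set e : ℝ := Real.exp (-t / r ^ 2) with hedef
    have he : 0 ≤ e := Real.exp_nonneg _
    have k1 := h1 t ht r hξ
    have k2 := h2 t ht r hξ
    have hsq : ∀ q : ℝ, (r ^ 2 : ℝ) ^ q = r ^ (2 * q) := by
      intro q
      rw [← Real.rpow_natCast r 2, ← Real.rpow_mul (norm_nonneg ξ)]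
      norm_num
      rfl
    rw [hsq] at k1 k2
    -- e^2 / r^4 ≤ K1 * r^(2*(l+1))
    have hr4 : (0:ℝ) < r ^ 4 := by positivity
    have hsplit : r ^ (2 * (l + 3)) = r ^ (2 * (l + 1)) * r ^ 4 := by
      rw [← Real.rpow_natCast r 4, ← Real.rpow_add hrpos]
      norm_num
      ring_nf
    have d1 : e ^ 2 / r ^ 4 ≤ K1 * r ^ (2 * (l + 1)) := by
      rw [div_le_iff₀ hr4]
      calc e ^ 2 ≤ C1 * (1 + t) ^ (-(l + 3)) * r ^ (2 * (l + 3)) := k1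
        _ = K1 * r ^ (2 * (l + 1)) * r ^ 4 := by rw [hsplit, hK1def]; ring
    have d2 : e ^ 2 ≤ K2 * r ^ (2 * l) := by
      calc e ^ 2 ≤ C2 * (1 + t) ^ (-l) * r ^ (2 * l) := k2
        _ = K2 * r ^ (2 * l) := by rw [hK2def]
    set A : ℝ := ‖a ξ‖ with hA
    set B : ℝ := ‖b ξ‖ with hB
    have hA0 : 0 ≤ A := norm_nonneg _
    have hB0 : 0 ≤ B := norm_nonneg _
    have e1 : (e / r ^ 2 * A) ^ 2 ≤ K1 * r ^ (2 * (l + 1)) * A ^ 2 := by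
      have : (e / r ^ 2 * A) ^ 2 = e ^ 2 / r ^ 4 * A ^ 2 := by
        field_simp
      rw [this]
      exact mul_le_mul_of_nonneg_right d1 (sq_nonneg A)
    have e2 : (e * B) ^ 2 ≤ K2 * r ^ (2 * l) * B ^ 2 := by
      rw [mul_pow]
      exact mul_le_mul_of_nonneg_right d2 (sq_nonneg B)
    have hexpand : (e / r ^ 2 * A + e * B) ^ 2
        ≤ 2 * (e / r ^ 2 * A) ^ 2 + 2 * (e * B) ^ 2 := by
      nlinarith [sq_nonneg (e / r ^ 2 * A - e * B)]
    show _ ≤ 2 * K1 * (‖ξ‖ ^ (2 * (l + 1)) * ‖a ξ‖ ^ 2) + 2 * K2 * (‖ξ‖ ^ (2 * l) * ‖b ξ‖ ^ 2)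
    nlinarith [e1, e2, hexpand]
  -- integral chain
  have hIa : 0 ≤ ∫ ξ : EuclideanSpace ℝ (Fin n), ‖ξ‖ ^ (2 * (l + 1)) * ‖a ξ‖ ^ 2 :=
    integral_nonneg fun ξ => by positivity
  have hIb : 0 ≤ ∫ ξ : EuclideanSpace ℝ (Fin n), ‖ξ‖ ^ (2 * l) * ‖b ξ‖ ^ 2 :=
    integral_nonneg fun ξ => by positivity
  have step1 : ∫ ξ in {ξ : EuclideanSpace ℝ (Fin n) | Real.sqrt 2 ≤ ‖ξ‖},
      (Real.exp (-t / ‖ξ‖ ^ 2) / ‖ξ‖ ^ 2 * ‖a ξ‖ +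
        Real.exp (-t / ‖ξ‖ ^ 2) * ‖b ξ‖) ^ 2
      ≤ ∫ ξ in {ξ : EuclideanSpace ℝ (Fin n) | Real.sqrt 2 ≤ ‖ξ‖}, g ξ := by
    apply integral_mono_of_nonneg
    · exact Filter.Eventually.of_forall fun ξ => sq_nonneg _
    · exact hg.restrict
    · rw [Filter.EventuallyLE, ae_restrict_iff' hS]
      exact Filter.Eventually.of_forall fun ξ hξ => hpt ξ hξ
  have step2 : ∫ ξ in {ξ : EuclideanSpace ℝ (Fin n) | Real.sqrt 2 ≤ ‖ξ‖}, g ξ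
      ≤ ∫ ξ, g ξ :=
    setIntegral_le_integral hg (Filter.Eventually.of_forall hgnn)
  have step3 : ∫ ξ, g ξ = 2 * K1 * (∫ ξ : EuclideanSpace ℝ (Fin n),
        ‖ξ‖ ^ (2 * (l + 1)) * ‖a ξ‖ ^ 2) +
      2 * K2 * (∫ ξ : EuclideanSpace ℝ (Fin n), ‖ξ‖ ^ (2 * l) * ‖b ξ‖ ^ 2) := by
    rw [hgdef]
    rw [integral_add (ha2.const_mul _) (hb2.const_mul _), integral_const_mul,
      integral_const_mul]
  have final : 2 * K1 * (∫ ξ : EuclideanSpace ℝ (Fin n),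
        ‖ξ‖ ^ (2 * (l + 1)) * ‖a ξ‖ ^ 2) +
      2 * K2 * (∫ ξ : EuclideanSpace ℝ (Fin n), ‖ξ‖ ^ (2 * l) * ‖b ξ‖ ^ 2)
      ≤ 2 * (C1 + C2) * (1 + t) ^ (-(l + 3)) *
          (∫ ξ : EuclideanSpace ℝ (Fin n), ‖ξ‖ ^ (2 * (l + 1)) * ‖a ξ‖ ^ 2) +
        2 * (C1 + C2) * (1 + t) ^ (-l) *
          (∫ ξ : EuclideanSpace ℝ (Fin n), ‖ξ‖ ^ (2 * l) * ‖b ξ‖ ^ 2) := by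
    rw [hK1def, hK2def]
    nlinarith [mul_nonneg hp1.le hIa, mul_nonneg hp2.le hIb, hC1.le, hC2.le]
  linarith [step1, step2.trans_eq step3, final]
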